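/- Let r be a natural number. If U belongs to H(r+1), i.e., U is implementable by a circuit with exactly r+1 CS-type gates, then there exist U' ∈ H(r), indices i < j in Fin n, and e ∈ {−1, 1} such that U = CS_{i,j}^e · U'. -/
import Mathlib


open Matrix

noncomputable section

/-- ω = exp(2πi/m). -/
def omega (m : ℕ) : ℂ := Complex.exp (2 * Real.pi * Complex.I / m)

/-- X_i : the permutation matrix of the map x ↦ Function.update x i (x i + 1). -/
def Xn (n : ℕ) (i : Fin n) : Matrix (Fin n → ZMod 2) (Fin n → ZMod 2) ℂ :=
  Matrix.of fun x y => if x = Function.update y i (y i + 1) then 1 else 0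

/-- T_i : the diagonal matrix whose (x,x) entry is ω^((x i).val). -/
def Tn (m n : ℕ) (i : Fin n) : Matrix (Fin n → ZMod 2) (Fin n → ZMod 2) ℂ :=
  Matrix.diagonal fun x => omega m ^ (x i).val

/-- CS_{i,j} : the diagonal matrix whose (x,x) entry is ω^(2·(x i).val·(x j).val). -/
def CSn (m n : ℕ) (i j : Fin n) : Matrix (Fin n → ZMod 2) (Fin n → ZMod 2) ℂ :=
  Matrix.diagonal fun x => omega m ^ (2 * (x i).val * (x j).val)

/-- CS_{i,j}⁻¹ : the diagonal matrix whose (x,x) entry is ω^(-2·(x i).val·(x j).val). -/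
def CSninv (m n : ℕ) (i j : Fin n) : Matrix (Fin n → ZMod 2) (Fin n → ZMod 2) ℂ :=
  Matrix.diagonal fun x => (omega m)⁻¹ ^ (2 * (x i).val * (x j).val)

/-- A gate of a CS-type circuit: some X_i, some power of some T_i, some CS_{i,j},
or some CS_{i,j}⁻¹ (with i ≠ j). -/
inductive GateCS (n : ℕ) where
  | X (i : Fin n)
  | Tpow (i : Fin n) (l : ℕ)
  | CS (i j : Fin n) (h : i ≠ j)
  | CSinv (i j : Fin n) (h : i ≠ j)

/-- The matrix of a gate. -/
def GateCS.toMatrix (m : ℕ) {n : ℕ} : GateCS n → Matrix (Fin n → ZMod 2) (Fin n → ZMod 2) ℂ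
  | .X i => Xn n i
  | .Tpow i l => Tn m n i ^ l
  | .CS i j _ => CSn m n i j
  | .CSinv i j _ => CSninv m n i j

/-- Whether a gate is a CS or CS⁻¹ gate. -/
def GateCS.isCS {n : ℕ} : GateCS n → Bool
  | .CS _ _ _ => true
  | .CSinv _ _ _ => true
  | _ => false

/-- H(r) : the set of matrices implementable by a circuit with exactly r CS-type gates. -/
def Hset (m n r : ℕ) : Set (Matrix (Fin n → ZMod 2) (Fin n → ZMod 2) ℂ) :=
  {U | ∃ L : List (GateCS n), (L.map (GateCS.toMatrix m)).prod = U ∧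
    L.countP (fun g => g.isCS) = r}

/-- Two matrices are phase-equivalent if they differ by a nonzero scalar. -/
def PhaseEq {α : Type*} (U V : Matrix α α ℂ) : Prop := ∃ c : ℂ, c ≠ 0 ∧ U = c • V

lemma omega_ne_zero (m : ℕ) : omega m ≠ 0 := Complex.exp_ne_zero _

lemma omega_pow_m (m : ℕ) (hm : 0 < m) : omega m ^ m = 1 := by
  rw [omega, ← Complex.exp_nat_mul]
  have hm' : (m : ℂ) ≠ 0 := Nat.cast_ne_zero.mpr hm.ne'
  rw [mul_div_cancel₀ _ hm', Complex.exp_two_pi_mul_I]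

lemma zmod2_val_lt (z : ZMod 2) : z.val < 2 := ZMod.val_lt z

lemma zmod2_val_add_one (z : ZMod 2) : (z + 1).val = 1 - z.val := by
  revert z; decide

lemma CSn_symm (m n : ℕ) (a b : Fin n) : CSn m n a b = CSn m n b a := by
  unfold CSn
  exact congrArg Matrix.diagonal (funext fun x => by rw [mul_right_comm])

lemma CSninv_symm (m n : ℕ) (a b : Fin n) : CSninv m n a b = CSninv m n b a := by
  unfold CSninv
  exact congrArg Matrix.diagonal (funext fun x => by rw [mul_right_comm])

lemma diagonal_comm {α : Type*} [Fintype α] [DecidableEq α] (d e : α → ℂ) :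
    Matrix.diagonal d * Matrix.diagonal e = Matrix.diagonal e * Matrix.diagonal d := by
  rw [Matrix.diagonal_mul_diagonal, Matrix.diagonal_mul_diagonal]
  exact congrArg Matrix.diagonal (funext fun i => mul_comm (d i) (e i))

lemma Tpow_comm_CSn (m n : ℕ) (i : Fin n) (l : ℕ) (a b : Fin n) :
    Tn m n i ^ l * CSn m n a b = CSn m n a b * Tn m n i ^ l := by
  rw [Tn, CSn, Matrix.diagonal_pow, diagonal_comm]

lemma Tpow_comm_CSninv (m n : ℕ) (i : Fin n) (l : ℕ) (a b : Fin n) :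
    Tn m n i ^ l * CSninv m n a b = CSninv m n a b * Tn m n i ^ l := by
  rw [Tn, CSninv, Matrix.diagonal_pow, diagonal_comm]

lemma Xn_comm_diag (n : ℕ) (i : Fin n) (d : (Fin n → ZMod 2) → ℂ)
    (hd : ∀ y v, d (Function.update y i v) = d y) :
    Xn n i * Matrix.diagonal d = Matrix.diagonal d * Xn n i := by
  ext x y
  rw [Matrix.mul_diagonal, Matrix.diagonal_mul]
  simp only [Xn, Matrix.of_apply]
  split
  · rename_i h; subst h; rw [hd]; ring
  · simp

lemma Xn_comm_CSn (m n : ℕ) (i a b : Fin n) (hia : i ≠ a) (hib : i ≠ b) :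
    Xn n i * CSn m n a b = CSn m n a b * Xn n i := by
  apply Xn_comm_diag
  intro y v
  rw [Function.update_of_ne (Ne.symm hia), Function.update_of_ne (Ne.symm hib)]

lemma Xn_comm_CSninv (m n : ℕ) (i a b : Fin n) (hia : i ≠ a) (hib : i ≠ b) :
    Xn n i * CSninv m n a b = CSninv m n a b * Xn n i := by
  apply Xn_comm_diag
  intro y v
  rw [Function.update_of_ne (Ne.symm hia), Function.update_of_ne (Ne.symm hib)]

lemma scalar_CSn (m : ℕ) (v w : ℕ) (hv : v < 2) (hw : w < 2) :
    omega m ^ (2 * v * w) = (omega m)⁻¹ ^ (2 * (1 - v) * w) * (omega m ^ w) ^ 2 := by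
  have hω : omega m ≠ 0 := omega_ne_zero m
  interval_cases v <;> interval_cases w <;>
    simp [inv_pow, ← pow_mul, inv_mul_cancel₀ (pow_ne_zero 2 hω)]

lemma scalar_CSninv (m : ℕ) (hm : 0 < m) (v w : ℕ) (hv : v < 2) (hw : w < 2) :
    (omega m)⁻¹ ^ (2 * v * w) =
      omega m ^ (2 * (1 - v) * w) * (omega m ^ w) ^ (2 * (m - 1)) := by
  have key2 : omega m ^ (2 * m) = 1 := by
    rw [mul_comm, pow_mul, omega_pow_m m hm, one_pow]
  interval_cases v <;> interval_cases w <;> simp [inv_pow, ← pow_mul]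
  · rw [← pow_add]
    have h2 : 2 + 2 * (m - 1) = 2 * m := by omega
    rw [h2, key2]
  · symm
    apply eq_inv_of_mul_eq_one_left
    rw [← pow_add]
    have h2 : 2 * (m - 1) + 2 = 2 * m := by omega
    rw [h2, key2]

lemma Xn_mul_CSn (m n : ℕ) (hm : 0 < m) (a b : Fin n) (hab : a ≠ b) :
    Xn n a * CSn m n a b = CSninv m n a b * (Tn m n b ^ 2 * Xn n a) := by
  rw [CSn, CSninv, Tn, Matrix.diagonal_pow]
  ext x y
  rw [Matrix.mul_diagonal, Matrix.diagonal_mul, Matrix.diagonal_mul]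
  simp only [Xn, Matrix.of_apply, Pi.pow_apply]
  split
  · rename_i h; subst h
    rw [Function.update_self, Function.update_of_ne (Ne.symm hab), zmod2_val_add_one]
    simp only [one_mul, mul_one]
    exact scalar_CSn m _ _ (zmod2_val_lt _) (zmod2_val_lt _)
  · simp

lemma Xn_mul_CSninv (m n : ℕ) (hm : 0 < m) (a b : Fin n) (hab : a ≠ b) :
    Xn n a * CSninv m n a b = CSn m n a b * (Tn m n b ^ (2 * (m - 1)) * Xn n a) := by
  rw [CSn, CSninv, Tn, Matrix.diagonal_pow]
  ext x y
  rw [Matrix.mul_diagonal, Matrix.diagonal_mul, Matrix.diagonal_mul]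
  simp only [Xn, Matrix.of_apply, Pi.pow_apply]
  split
  · rename_i h; subst h
    rw [Function.update_self, Function.update_of_ne (Ne.symm hab), zmod2_val_add_one]
    simp only [one_mul, mul_one]
    exact scalar_CSninv m hm _ _ (zmod2_val_lt _) (zmod2_val_lt _)
  · simp

lemma Hset_prepend {m n r : ℕ} (g : GateCS n) (hg : g.isCS = false)
    {U : Matrix (Fin n → ZMod 2) (Fin n → ZMod 2) ℂ} (hU : U ∈ Hset m n r) :
    g.toMatrix m * U ∈ Hset m n r := by
  obtain ⟨L, hL, hc⟩ := hU
  exact ⟨g :: L, by simp [hL], by simp [List.countP_cons, hg, hc]⟩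

lemma key_decomp (m n : ℕ) (hm : 0 < m) :
    ∀ (L : List (GateCS n)) (r : ℕ), L.countP (fun g => g.isCS) = r + 1 →
    ∃ a b : Fin n, a ≠ b ∧ ∃ U' ∈ Hset m n r,
      ((L.map (GateCS.toMatrix m)).prod = CSn m n a b * U' ∨
       (L.map (GateCS.toMatrix m)).prod = CSninv m n a b * U') := by
  intro L
  induction L with
  | nil => intro r h; simp at h
  | cons g L ih =>
    intro r hcount
    match g with
    | .CS a b hab =>
        refine ⟨a, b, hab, (L.map (GateCS.toMatrix m)).prod, ⟨L, rfl, ?_⟩, Or.inl ?_⟩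
        · have h2 : L.countP (fun g => g.isCS) + 1 = r + 1 := by
            rw [← hcount, List.countP_cons]
            simp [GateCS.isCS]
          omega
        · simp [GateCS.toMatrix]
    | .CSinv a b hab =>
        refine ⟨a, b, hab, (L.map (GateCS.toMatrix m)).prod, ⟨L, rfl, ?_⟩, Or.inr ?_⟩
        · have h2 : L.countP (fun g => g.isCS) + 1 = r + 1 := by
            rw [← hcount, List.countP_cons]
            simp [GateCS.isCS]
          omega
        · simp [GateCS.toMatrix]
    | .Tpow i l =>
        have h' : L.countP (fun g => g.isCS) = r + 1 := by
          rw [← hcount, List.countP_cons]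
          simp [GateCS.isCS]
        obtain ⟨a, b, hab, U', hU', hd⟩ := ih r h'
        refine ⟨a, b, hab, Tn m n i ^ l * U',
          Hset_prepend (.Tpow i l) rfl hU', ?_⟩
        rcases hd with h | h
        · left
          simp only [List.map_cons, List.prod_cons, GateCS.toMatrix, h]
          rw [← mul_assoc, Tpow_comm_CSn, mul_assoc]
        · right
          simp only [List.map_cons, List.prod_cons, GateCS.toMatrix, h]
          rw [← mul_assoc, Tpow_comm_CSninv, mul_assoc]
    | .X i =>
        have h' : L.countP (fun g => g.isCS) = r + 1 := by
          rw [← hcount, List.countP_cons]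
          simp [GateCS.isCS]
        obtain ⟨a, b, hab, U', hU', hd⟩ := ih r h'
        simp only [List.map_cons, List.prod_cons, GateCS.toMatrix]
        by_cases hia : i = a
        · subst hia
          rcases hd with h | h
          · refine ⟨i, b, hab, Tn m n b ^ 2 * (Xn n i * U'),
              Hset_prepend (.Tpow b 2) rfl (Hset_prepend (.X i) rfl hU'), Or.inr ?_⟩
            rw [h, ← mul_assoc, Xn_mul_CSn m n hm i b hab]
            simp only [mul_assoc]
          · refine ⟨i, b, hab, Tn m n b ^ (2 * (m - 1)) * (Xn n i * U'),
              Hset_prepend (.Tpow b (2 * (m - 1))) rfl (Hset_prepend (.X i) rfl hU'), Or.inl ?_⟩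
            rw [h, ← mul_assoc, Xn_mul_CSninv m n hm i b hab]
            simp only [mul_assoc]
        · by_cases hib : i = b
          · subst hib
            rcases hd with h | h
            · refine ⟨i, a, fun e => hab e.symm, Tn m n a ^ 2 * (Xn n i * U'),
                Hset_prepend (.Tpow a 2) rfl (Hset_prepend (.X i) rfl hU'), Or.inr ?_⟩
              rw [h, CSn_symm m n a i, ← mul_assoc,
                Xn_mul_CSn m n hm i a (fun e => hab e.symm)]
              simp only [mul_assoc]
            · refine ⟨i, a, fun e => hab e.symm, Tn m n a ^ (2 * (m - 1)) * (Xn n i * U'),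
                Hset_prepend (.Tpow a (2 * (m - 1))) rfl (Hset_prepend (.X i) rfl hU'), Or.inl ?_⟩
              rw [h, CSninv_symm m n a i, ← mul_assoc,
                Xn_mul_CSninv m n hm i a (fun e => hab e.symm)]
              simp only [mul_assoc]
          · refine ⟨a, b, hab, Xn n i * U', Hset_prepend (.X i) rfl hU', ?_⟩
            rcases hd with h | h
            · left
              rw [h, ← mul_assoc, Xn_comm_CSn m n i a b hia hib, mul_assoc]
            · right
              rw [h, ← mul_assoc, Xn_comm_CSninv m n i a b hia hib, mul_assoc]

theorem H_succ_decomposition (m n : ℕ) (hm : 0 < m) (hn : 0 < n) (r : ℕ)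
    (U : Matrix (Fin n → ZMod 2) (Fin n → ZMod 2) ℂ) (hU : U ∈ Hset m n (r + 1)) :
    ∃ U' ∈ Hset m n r, ∃ i j : Fin n, i < j ∧
      (U = CSn m n i j * U' ∨ U = CSninv m n i j * U') := by
  obtain ⟨L, hL, hc⟩ := hU
  obtain ⟨a, b, hab, U', hU', hd⟩ := key_decomp m n hm L r hc
  rw [← hL]
  rcases lt_or_gt_of_ne hab with h | h
  · exact ⟨U', hU', a, b, h, hd⟩
  · refine ⟨U', hU', b, a, h, ?_⟩
    rw [CSn_symm m n b a, CSninv_symm m n b a]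
    exact hd

end
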